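/- Let u, v ∈ ℂ with |u|² + |v|² = 1 and u + conj(u) = 2cos(dθ) for some real θ with sinθ ≠ 0 and sin(dθ) ≠ 0 (d a positive integer). Put s := sin(dθ)/sinθ and t := sin((d−1)θ)/sinθ. Then |v|² + |u + t|² = s². -/

import Mathlib

/-- Let `u, v ∈ ℂ` with `|u|² + |v|² = 1` and `u + conj u = 2 cos (dθ)` for a real `θ`
with `sin θ ≠ 0`, `sin (dθ) ≠ 0` (`d` a positive integer).  With
`s = sin(dθ)/sin θ` and `t = sin((d-1)θ)/sin θ`, one has
`|v|² + |u + t|² = s²`. -/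
theorem su2_norm_identity (u v : ℂ) (d : ℕ) (hd : 1 ≤ d) (θ : ℝ)
    (hθ : Real.sin θ ≠ 0) (hdθ : Real.sin (d * θ) ≠ 0)
    (huv : ‖u‖ ^ 2 + ‖v‖ ^ 2 = 1)
    (hu : u + (starRingEnd ℂ) u = 2 * Real.cos (d * θ)) :
    let s : ℝ := Real.sin (d * θ) / Real.sin θ
    let t : ℝ := Real.sin (((d : ℝ) - 1) * θ) / Real.sin θ
    ‖v‖ ^ 2 + ‖u + (t : ℂ)‖ ^ 2 = s ^ 2 := by
  intro s t
  have hre : u.re = Real.cos (d * θ) := by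
    have h2 := congrArg Complex.re hu
    simp only [Complex.add_re, Complex.conj_re, Complex.mul_re, Complex.ofReal_re,
      Complex.ofReal_im, Complex.re_ofNat, Complex.im_ofNat] at h2
    linarith
  have habs : ‖u‖ ^ 2 = u.re ^ 2 + u.im ^ 2 := by
    rw [Complex.sq_norm, Complex.normSq_apply]; ring
  have habs2 : ‖u + (t : ℂ)‖ ^ 2 = (u.re + t) ^ 2 + u.im ^ 2 := by
    rw [Complex.sq_norm, Complex.normSq_apply]
    simp [Complex.add_re, Complex.add_im]
    ring
  have hsub : Real.sin (((d : ℝ) - 1) * θ) =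
      Real.sin (d * θ) * Real.cos θ - Real.cos (d * θ) * Real.sin θ := by
    have : ((d : ℝ) - 1) * θ = (d : ℝ) * θ - θ := by ring
    rw [this, Real.sin_sub]
  have hpy : Real.sin θ ^ 2 + Real.cos θ ^ 2 = 1 := Real.sin_sq_add_cos_sq θ
  have key : 1 + 2 * t * Real.cos (d * θ) + t ^ 2 = s ^ 2 := by
    have hs2 : Real.sin θ ^ 2 ≠ 0 := pow_ne_zero 2 hθ
    have hpy2 : Real.sin ((d:ℝ) * θ) ^ 2 + Real.cos ((d:ℝ) * θ) ^ 2 = 1 :=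
      Real.sin_sq_add_cos_sq _
    simp only [s, t]
    field_simp
    rw [hsub]
    linear_combination (Real.sin ((d:ℝ) * θ) ^ 2) * hpy -
      Real.sin θ ^ 2 * hpy2
  rw [habs2]
  have h1 : ‖v‖ ^ 2 = 1 - (u.re ^ 2 + u.im ^ 2) := by
    rw [← habs]; linarith
  rw [h1, hre]
  linarith [key]
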